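/- Fix integers ℓ ≥ 1 and k ≥ 8ℓ, and set s = (k−8ℓ)/(2 + 2 ln ℓ). There exists N such that for every n ≥ N and every injective vector of nonnegative reals v : {1,…,n} → ℝ_{≥0}, the following holds. Let σ be a uniformly random permutation of {1,…,n}, let w_i = v(σ(i)), and let S' = { i : w_i is among the b(i) largest values of w_1,…,w_i }. Then E_σ[TOP_ℓ(S'; w)] ≥ (1 − ℓ·e^{−s}) · TOP_ℓ(v). -/

import Mathlib

open Finset
open Equiv

/-- `TOPval ℓ A v` is the maximum of `∑ i ∈ B, v i` over `B ⊆ A` with `|B| ≤ ℓ`. -/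
noncomputable def TOPval {n : ℕ} (ℓ : ℕ) (A : Finset (Fin n)) (v : Fin n → ℝ) : ℝ :=
  ((A.powerset.filter fun B => B.card ≤ ℓ).image fun B => ∑ i ∈ B, v i).max'
    (Finset.Nonempty.image
      ⟨∅, Finset.mem_filter.mpr ⟨Finset.empty_mem_powerset A, by simp⟩⟩ _)

/-- The parameter `s = (k − 8ℓ)/(2 + 2 ln ℓ)`. -/
noncomputable def sParam (ℓ k : ℕ) : ℝ := ((k : ℝ) - 8 * ℓ) / (2 + 2 * Real.log ℓ)

/-- The partition points `β₀ = ⌊n e^{−s}/(2eℓ)⌋`, `βⱼ = ⌊j n e^{−s/j}/(2eℓ)⌋` for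
`1 ≤ j ≤ ℓ − 1`, and `βⱼ = n` for `j ≥ ℓ`. -/
noncomputable def betaFun (ℓ k n : ℕ) (j : ℕ) : ℕ :=
  if j = 0 then ⌊(n : ℝ) * Real.exp (-sParam ℓ k) / (2 * Real.exp 1 * ℓ)⌋₊
  else if j < ℓ then ⌊(j : ℝ) * n * Real.exp (-sParam ℓ k / j) / (2 * Real.exp 1 * ℓ)⌋₊
  else n

/-- `bFun ℓ k n i` is the unique `j ∈ {0,…,ℓ}` with `β_{j−1} < i ≤ β_j` (for `1 ≤ i ≤ n`),
defined as the least `j` with `i ≤ β_j`. -/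
noncomputable def bFun (ℓ k n : ℕ) (i : ℕ) : ℕ := sInf {j : ℕ | i ≤ betaFun ℓ k n j}

/-- The candidate set of `ALG'^β`: arrival `i` is a candidate iff `w i` is among the
`b(i)` largest values of `w₁,…,wᵢ`. -/
noncomputable def candSet (ℓ k : ℕ) {n : ℕ} (w : Fin n → ℝ) : Finset (Fin n) :=
  Finset.univ.filter fun i =>
    (Finset.univ.filter fun j : Fin n => j ≤ i ∧ w i ≤ w j).card ≤ bFun ℓ k n ((i : ℕ) + 1)

/-- The accepted set of `ALG^β`: arrival `i` is accepted iff it is a candidate and fewer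
than `k` arrivals were accepted before it, i.e. the first at most `k` candidates. -/
noncomputable def secAccept (ℓ k : ℕ) {n : ℕ} (w : Fin n → ℝ) : Finset (Fin n) :=
  (candSet ℓ k w).filter fun i => ((candSet ℓ k w).filter fun j => j < i).card < k


lemma count_fix {n : ℕ} (T : Finset (Fin n)) (f : Fin n → Fin n) (hf : Set.InjOn f T) :
    ((univ : Finset (Perm (Fin n))).filter fun σ => ∀ x ∈ T, σ x = f x).card
      = (n - T.card).factorial := by
  classical
  have h1 : ((univ : Finset (Perm (Fin n))).filter fun σ => ∀ x ∈ T, σ x = f x).card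
      = Fintype.card {σ : Perm (Fin n) // ∀ x : (↑T : Set (Fin n)), σ x = f x} := by
    rw [Fintype.card_subtype]
    congr 1
    apply filter_congr
    intro σ _
    exact ⟨fun h x => h x x.2, fun h x hx => h ⟨x, hx⟩⟩
  set U : Finset (Fin n) := T.image f with hU
  have hbij : Set.BijOn f (↑T) (↑U : Set (Fin n)) := by
    rw [hU, coe_image]; exact hf.bijOn_image
  let e₀ : (↑T : Set (Fin n)) ≃ (↑U : Set (Fin n)) := hbij.equiv f
  have h2 : {σ : Perm (Fin n) // ∀ x : (↑T : Set (Fin n)), σ x = f x}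
      ≃ (((↑T : Set (Fin n))ᶜ : Set (Fin n)) ≃ (((↑U : Set (Fin n))ᶜ : Set (Fin n)))) := by
    have heq : ∀ σ : Perm (Fin n), (∀ x : (↑T : Set (Fin n)), σ x = f x)
        ↔ (∀ x : (↑T : Set (Fin n)), σ x = (e₀ x : Fin n)) := fun σ => Iff.rfl
    exact (Equiv.subtypeEquivRight heq).trans (Equiv.Set.compl e₀)
  rw [h1, Fintype.card_congr h2]
  have hUcard : U.card = T.card := card_image_of_injOn hf
  have hc1 : Fintype.card (((↑T : Set (Fin n))ᶜ : Set (Fin n))) = n - T.card := by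
    rw [Fintype.card_compl_set]; simp
  have hc2 : Fintype.card (((↑U : Set (Fin n))ᶜ : Set (Fin n))) = n - T.card := by
    rw [Fintype.card_compl_set]; simp [hUcard]
  rw [Fintype.card_equiv (Fintype.equivOfCardEq (hc1.trans hc2.symm)), hc1]

lemma count_into {n : ℕ} (T A : Finset (Fin n)) :
    ((univ : Finset (Perm (Fin n))).filter fun σ => ∀ x ∈ T, σ x ∈ A).card
      = A.card.descFactorial T.card * (n - T.card).factorial := by
  classical
  set s := (univ : Finset (Perm (Fin n))).filter fun σ => ∀ x ∈ T, σ x ∈ A with hs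
  set t := (univ : Finset ((↥T : Type) → Fin n)).filter
    (fun g => Function.Injective g ∧ ∀ x, g x ∈ A) with ht
  have hmap : ∀ σ ∈ s, (fun x : ↥T => σ ↑x) ∈ t := by
    intro σ hσ
    rw [hs, mem_filter] at hσ
    rw [ht, mem_filter]
    exact ⟨mem_univ _, fun a b h => Subtype.ext (σ.injective h), fun x => hσ.2 x x.2⟩
  rw [card_eq_sum_card_fiberwise hmap]
  have hfib : ∀ g ∈ t, (s.filter fun σ => (fun x : ↥T => σ ↑x) = g).card
      = (n - T.card).factorial := by
    intro g hg
    rw [ht, mem_filter] at hg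
    obtain ⟨-, hginj, hgA⟩ := hg
    set f : Fin n → Fin n := fun x => if h : x ∈ T then g ⟨x, h⟩ else x with hf
    have hfT : ∀ x (h : x ∈ T), f x = g ⟨x, h⟩ := by intro x h; simp [hf, dif_pos h]
    have hinj : Set.InjOn f ↑T := by
      intro x hx y hy hxy
      rw [mem_coe] at hx hy
      rw [hfT x hx, hfT y hy] at hxy
      exact congrArg Subtype.val (hginj hxy)
    have hset : (s.filter fun σ => (fun x : ↥T => σ ↑x) = g)
        = (univ : Finset (Perm (Fin n))).filter fun σ => ∀ x ∈ T, σ x = f x := by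
      ext σ
      simp only [hs, mem_filter, mem_univ, true_and, filter_filter]
      constructor
      · rintro ⟨-, hFg⟩ x hx
        rw [hfT x hx, ← hFg]
      · intro h
        constructor
        · intro x hx; rw [h x hx, hfT x hx]; exact hgA _
        · funext x; rw [h x x.2, hfT x x.2]
    rw [hset, count_fix T f hinj]
  rw [Finset.sum_congr rfl hfib, Finset.sum_const, smul_eq_mul]
  congr 1
  have : t.card = Fintype.card ((↥T : Type) ↪ (↥A : Type)) := by
    rw [ht, ← Fintype.card_subtype]
    apply Fintype.card_congr
    exact ⟨fun g => ⟨fun x => ⟨g.1 x, g.2.2 x⟩, fun a b h => g.2.1 (congrArg Subtype.val h)⟩,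
      fun j => ⟨fun x => ↑(j x), fun a b h => j.injective (Subtype.ext h), fun x => (j x).2⟩,
      fun g => rfl, fun j => rfl⟩
  rw [this, Fintype.card_embedding_eq, Fintype.card_coe, Fintype.card_coe]

lemma count_early {n : ℕ} (T : Finset (Fin n)) (m : ℕ) :
    ((univ : Finset (Perm (Fin n))).filter fun σ => ∀ x ∈ T, ((σ⁻¹ x : Fin n) : ℕ) < m).card
      ≤ m.descFactorial T.card * (n - T.card).factorial := by
  classical
  set A := (univ : Finset (Fin n)).filter (fun p : Fin n => (p : ℕ) < m) with hA
  have hcard : ((univ : Finset (Perm (Fin n))).filter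
      fun σ => ∀ x ∈ T, ((σ⁻¹ x : Fin n) : ℕ) < m).card
      = ((univ : Finset (Perm (Fin n))).filter fun σ => ∀ x ∈ T, σ x ∈ A).card := by
    apply Finset.card_bij' (fun σ _ => σ⁻¹) (fun σ _ => σ⁻¹)
    case left_inv => intro σ _; simp
    case right_inv => intro σ _; simp
    case hi =>
      intro σ hσ
      rw [mem_filter] at hσ ⊢
      refine ⟨mem_univ _, fun x hx => ?_⟩
      rw [hA, mem_filter]
      exact ⟨mem_univ _, hσ.2 x hx⟩
    case hj =>
      intro σ hσ
      rw [mem_filter] at hσ ⊢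
      refine ⟨mem_univ _, fun x hx => ?_⟩
      have := hσ.2 x hx
      rw [hA, mem_filter] at this
      simpa using this.2
  rw [hcard, count_into T A]
  apply Nat.mul_le_mul_right
  apply Nat.descFactorial_le
  calc A.card ≤ (Finset.range m).card := by
        refine card_le_card_of_injOn (fun p : Fin n => (p : ℕ)) ?_ ?_
        · intro p hp; rw [hA, mem_coe, mem_filter] at hp; exact mem_range.mpr hp.2
        · intro a _ b _ h; exact Fin.ext h
    _ = m := card_range m

lemma descFactorial_ratio {m n : ℕ} (h : m ≤ n) (t : ℕ) :
    m.descFactorial t * n ^ t ≤ m ^ t * n.descFactorial t := by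
  induction t with
  | zero => simp
  | succ t ih =>
    rw [Nat.descFactorial_succ, Nat.descFactorial_succ, pow_succ, pow_succ]
    have key : (m - t) * n ≤ m * (n - t) := by
      rw [Nat.sub_mul, Nat.mul_sub]
      have hmt : m * t ≤ t * n := by rw [mul_comm]; exact Nat.mul_le_mul_left t h
      exact Nat.sub_le_sub_left hmt (m * n)
    calc (m - t) * m.descFactorial t * (n ^ t * n)
        = ((m - t) * n) * (m.descFactorial t * n ^ t) := by ring
      _ ≤ (m * (n - t)) * (m ^ t * n.descFactorial t) := Nat.mul_le_mul key ih
      _ = m ^ t * m * ((n - t) * n.descFactorial t) := by ring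

lemma dF_mul_fact {t n : ℕ} (h : t ≤ n) :
    n.descFactorial t * (n - t).factorial = n.factorial := by
  rw [Nat.descFactorial_eq_factorial_mul_choose]
  calc t.factorial * n.choose t * (n - t).factorial
      = n.choose t * t.factorial * (n - t).factorial := by ring
    _ = n.factorial := Nat.choose_mul_factorial_mul_factorial h

lemma le_TOPval {n ℓ : ℕ} {A B : Finset (Fin n)} (v : Fin n → ℝ)
    (hBA : B ⊆ A) (hB : B.card ≤ ℓ) : ∑ i ∈ B, v i ≤ TOPval ℓ A v := by
  apply Finset.le_max'
  exact mem_image.mpr ⟨B, mem_filter.mpr ⟨mem_powerset.mpr hBA, hB⟩, rfl⟩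

lemma TOPval_exists {n ℓ : ℕ} (A : Finset (Fin n)) (v : Fin n → ℝ) :
    ∃ B, B ⊆ A ∧ B.card ≤ ℓ ∧ TOPval ℓ A v = ∑ i ∈ B, v i := by
  have h : TOPval ℓ A v ∈ (A.powerset.filter fun B => B.card ≤ ℓ).image fun B => ∑ i ∈ B, v i :=
    Finset.max'_mem _ _
  obtain ⟨B, hB, hBsum⟩ := mem_image.mp h
  rw [mem_filter, mem_powerset] at hB
  exact ⟨B, hB.1, hB.2, hBsum.symm⟩

lemma opt_larger_lt {n ℓ : ℕ} (hℓ : 1 ≤ ℓ) (v : Fin n → ℝ) {B : Finset (Fin n)}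
    (hBc : B.card ≤ ℓ) (hBopt : TOPval ℓ Finset.univ v = ∑ i ∈ B, v i)
    {e : Fin n} (he : e ∈ B) :
    ((univ : Finset (Fin n)).filter fun x => v e < v x).card < ℓ := by
  by_contra hc
  push_neg at hc
  set L := (univ : Finset (Fin n)).filter fun x => v e < v x with hL
  have heL : e ∉ L := by simp [hL]
  have : ∃ x ∈ L, x ∉ B := by
    by_contra hx
    push_neg at hx
    have hsub : L ⊆ B.erase e := fun x hxL =>
      mem_erase.mpr ⟨fun h => heL (h ▸ hxL), hx x hxL⟩
    have := card_le_card hsub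
    have hBe : (B.erase e).card = B.card - 1 := card_erase_of_mem he
    omega
  obtain ⟨x, hxL, hxB⟩ := this
  set B' := insert x (B.erase e) with hB'
  have hxe : x ∉ B.erase e := fun h => hxB (mem_of_mem_erase h)
  have hcard : B'.card ≤ ℓ := by
    rw [hB', card_insert_of_notMem hxe, card_erase_of_mem he]
    omega
  have hsum : ∑ i ∈ B', v i = v x + (∑ i ∈ B, v i - v e) := by
    rw [hB', sum_insert hxe, Finset.sum_erase_eq_sub he]
  have hlt : ∑ i ∈ B, v i < ∑ i ∈ B', v i := by
    rw [hsum]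
    have : v e < v x := by rw [hL, mem_filter] at hxL; exact hxL.2
    linarith
  have := le_TOPval v (subset_univ B') hcard
  rw [hBopt] at this
  linarith

lemma betaFun_ell {ℓ k n : ℕ} (hℓ : 1 ≤ ℓ) : betaFun ℓ k n ℓ = n := by
  rw [betaFun]
  simp [Nat.one_le_iff_ne_zero.mp hℓ, lt_irrefl]

lemma bFun_le {ℓ k n : ℕ} (hℓ : 1 ≤ ℓ) {i : ℕ} (hi : i ≤ n) :
    bFun ℓ k n i ≤ ℓ ∧ i ≤ betaFun ℓ k n (bFun ℓ k n i) := by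
  have hmem : ℓ ∈ {j : ℕ | i ≤ betaFun ℓ k n j} := by
    rw [Set.mem_setOf_eq, betaFun_ell hℓ]; exact hi
  exact ⟨Nat.sInf_le hmem, Nat.sInf_mem (Set.nonempty_of_mem hmem)⟩

lemma fail_subset {ℓ k n : ℕ} (hℓ : 1 ≤ ℓ) (v : Fin n → ℝ) (hv : Function.Injective v)
    (e : Fin n) (hL : ((univ : Finset (Fin n)).filter fun x => v e < v x).card < ℓ) :
    ((univ : Finset (Perm (Fin n))).filter fun σ => σ⁻¹ e ∉ candSet ℓ k (fun i => v (σ i)))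
      ⊆ (Finset.range ℓ).biUnion fun j =>
          (((univ : Finset (Fin n)).filter fun x => v e < v x).powersetCard j).biUnion fun S =>
            (univ : Finset (Perm (Fin n))).filter fun σ =>
              ∀ x ∈ insert e S, ((σ⁻¹ x : Fin n) : ℕ) < betaFun ℓ k n j := by
  classical
  set L := (univ : Finset (Fin n)).filter fun x => v e < v x with hLdef
  intro σ hσ
  rw [mem_filter] at hσ
  obtain ⟨-, hnc⟩ := hσ
  set w : Fin n → ℝ := fun i => v (σ i) with hw
  set i : Fin n := σ⁻¹ e with hi
  set b : ℕ := bFun ℓ k n ((i : ℕ) + 1) with hb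
  set D : Finset (Fin n) := univ.filter fun x => x ≤ i ∧ w i ≤ w x with hD
  have hDb : b < D.card := by
    by_contra hc
    push_neg at hc
    exact hnc (mem_filter.mpr ⟨mem_univ _, hc⟩)
  have hBle := bFun_le (k := k) (n := n) hℓ (i := (i : ℕ) + 1) i.isLt
  rw [← hb] at hBle
  have hiD : i ∈ D := by
    rw [hD, mem_filter]
    exact ⟨mem_univ _, le_refl i, le_refl _⟩
  have hwi : w i = v e := by rw [hw, hi]; simp
  have hmap : ∀ x ∈ D.erase i, σ x ∈ L := by
    intro x hx
    rw [mem_erase] at hx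
    obtain ⟨hxne, hxD⟩ := hx
    rw [hD, mem_filter] at hxD
    rw [hLdef, mem_filter]
    refine ⟨mem_univ _, ?_⟩
    have hge : v e ≤ v (σ x) := by rw [← hwi]; exact hxD.2.2
    rcases lt_or_eq_of_le hge with h | h
    · exact h
    · exfalso
      apply hxne
      have : σ x = e := hv h.symm
      rw [hi, ← this]
      simp
  set S0 : Finset (Fin n) := (D.erase i).image σ with hS0
  have hS0L : S0 ⊆ L := by
    intro y hy
    rw [hS0, mem_image] at hy
    obtain ⟨x, hx, rfl⟩ := hy
    exact hmap x hx
  have hS0card : S0.card = (D.erase i).card := by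
    rw [hS0]
    exact card_image_of_injOn fun a _ b _ h => σ.injective h
  have hbS0 : b ≤ S0.card := by
    rw [hS0card, card_erase_of_mem hiD]
    omega
  obtain ⟨S, hSsub, hScard⟩ := Finset.exists_subset_card_eq hbS0
  have hbℓ : b < ℓ := lt_of_le_of_lt (hbS0.trans (card_le_card hS0L)) hL
  rw [mem_biUnion]
  refine ⟨b, mem_range.mpr hbℓ, ?_⟩
  rw [mem_biUnion]
  refine ⟨S, mem_powersetCard.mpr ⟨hSsub.trans hS0L, hScard⟩, ?_⟩
  rw [mem_filter]
  refine ⟨mem_univ _, ?_⟩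
  intro x hx
  rw [mem_insert] at hx
  rcases hx with rfl | hxS
  · rw [← hi]
    omega
  · have hxS0 := hSsub hxS
    rw [hS0, mem_image] at hxS0
    obtain ⟨y, hy, rfl⟩ := hxS0
    rw [mem_erase] at hy
    have hyi : y < i := lt_of_le_of_ne (by rw [hD, mem_filter] at hy; exact hy.2.2.1) hy.1
    have : σ⁻¹ (σ y) = y := by simp
    rw [this]
    have : (y : ℕ) < (i : ℕ) := hyi
    omega

lemma sParam_nonneg {ℓ k : ℕ} (hℓ : 1 ≤ ℓ) (hk : 8 * ℓ ≤ k) : 0 ≤ sParam ℓ k := by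
  apply div_nonneg
  · have : (8 * ℓ : ℝ) ≤ k := by exact_mod_cast hk
    linarith
  · have : 0 ≤ Real.log ℓ := Real.log_nonneg (by exact_mod_cast hℓ)
    linarith

lemma one_le_exp_one : (1 : ℝ) ≤ Real.exp 1 := by
  have := Real.add_one_le_exp (1 : ℝ)
  linarith

lemma betaFun_le_n {ℓ k n : ℕ} (hℓ : 1 ≤ ℓ) (hk : 8 * ℓ ≤ k) (j : ℕ) :
    betaFun ℓ k n j ≤ n := by
  have he1 : (1 : ℝ) ≤ Real.exp 1 := one_le_exp_one
  have hℓR : (1 : ℝ) ≤ (ℓ : ℝ) := by exact_mod_cast hℓ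
  have hs := sParam_nonneg hℓ hk
  have hden : (0 : ℝ) < 2 * Real.exp 1 * ℓ := by nlinarith
  have hn0 : (0 : ℝ) ≤ (n : ℝ) := Nat.cast_nonneg n
  rw [betaFun]
  split_ifs with h0 hj
  · have hx : (n : ℝ) * Real.exp (-sParam ℓ k) / (2 * Real.exp 1 * ℓ) ≤ (n : ℝ) := by
      rw [div_le_iff₀ hden]
      have hexp : Real.exp (-sParam ℓ k) ≤ 1 := Real.exp_le_one_iff.mpr (by linarith)
      have hexp0 : 0 < Real.exp (-sParam ℓ k) := Real.exp_pos _
      calc (n : ℝ) * Real.exp (-sParam ℓ k) ≤ n * 1 := mul_le_mul_of_nonneg_left hexp hn0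
        _ ≤ n * (2 * Real.exp 1 * ℓ) := by
            nlinarith [mul_nonneg hn0 (by nlinarith : (0:ℝ) ≤ 2 * Real.exp 1 * ℓ - 1)]
    calc ⌊(n : ℝ) * Real.exp (-sParam ℓ k) / (2 * Real.exp 1 * ℓ)⌋₊
        ≤ ⌊(n : ℝ)⌋₊ := Nat.floor_le_floor hx
      _ = n := Nat.floor_natCast n
  · have hjR : (j : ℝ) ≤ (ℓ : ℝ) := by exact_mod_cast le_of_lt hj
    have hj0 : (0 : ℝ) ≤ (j : ℝ) := Nat.cast_nonneg j
    have hx : (j : ℝ) * n * Real.exp (-sParam ℓ k / j) / (2 * Real.exp 1 * ℓ) ≤ (n : ℝ) := by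
      rw [div_le_iff₀ hden]
      have hexp : Real.exp (-sParam ℓ k / j) ≤ 1 := by
        apply Real.exp_le_one_iff.mpr
        apply div_nonpos_of_nonpos_of_nonneg <;> linarith
      have hexp0 : 0 < Real.exp (-sParam ℓ k / j) := Real.exp_pos _
      calc (j : ℝ) * n * Real.exp (-sParam ℓ k / j) ≤ (j : ℝ) * n * 1 :=
            mul_le_mul_of_nonneg_left hexp (by positivity)
        _ = (j : ℝ) * n := by ring
        _ ≤ n * (2 * Real.exp 1 * ℓ) := by
            nlinarith [mul_le_mul_of_nonneg_right hjR hn0,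
              mul_nonneg (mul_nonneg (by linarith : (0:ℝ) ≤ (ℓ:ℝ)) hn0)
                (by linarith : (0:ℝ) ≤ 2 * Real.exp 1 - 1)]
    calc ⌊(j : ℝ) * n * Real.exp (-sParam ℓ k / j) / (2 * Real.exp 1 * ℓ)⌋₊
        ≤ ⌊(n : ℝ)⌋₊ := Nat.floor_le_floor hx
      _ = n := Nat.floor_natCast n
  · exact le_rfl

lemma pow_le_factorial_mul_exp (m : ℕ) {x : ℝ} (hx : 0 ≤ x) :
    x ^ m ≤ (m.factorial : ℝ) * Real.exp x := by
  have hm : (0 : ℝ) < (m.factorial : ℝ) := by exact_mod_cast m.factorial_pos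
  have h1 : x ^ m / (m.factorial : ℝ) ≤ Real.exp x :=
    le_trans (Finset.single_le_sum (f := fun i => x ^ i / (i.factorial : ℝ))
      (fun i _ => by positivity) (Finset.self_mem_range_succ m))
      (Real.sum_le_exp_of_nonneg hx (m + 1))
  rw [div_le_iff₀ hm] at h1
  calc x ^ m ≤ Real.exp x * m.factorial := h1
    _ = (m.factorial : ℝ) * Real.exp x := by ring

lemma choose_beta_bound {ℓ k n : ℕ} (hℓ : 1 ≤ ℓ) (hk : 8 * ℓ ≤ k) (hn : 1 ≤ n)
    {c : ℕ} (hc : c ≤ ℓ) {j : ℕ} (hj : j < ℓ) :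
    (c.choose j : ℝ) * ((betaFun ℓ k n j : ℝ) / n) ^ (j + 1) ≤ Real.exp (-sParam ℓ k) := by
  have he1 : (1 : ℝ) ≤ Real.exp 1 := one_le_exp_one
  have hℓR : (1 : ℝ) ≤ (ℓ : ℝ) := by exact_mod_cast hℓ
  have hs := sParam_nonneg hℓ hk
  have hnR : (0 : ℝ) < (n : ℝ) := by exact_mod_cast hn
  have hE : (0 : ℝ) < Real.exp (-sParam ℓ k) := Real.exp_pos _
  have hden : (0 : ℝ) < 2 * Real.exp 1 * ℓ := by nlinarith
  have hden1 : (1 : ℝ) ≤ 2 * Real.exp 1 * ℓ := by nlinarith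
  by_cases h0 : j = 0
  · subst h0
    have hβ : (betaFun ℓ k n 0 : ℝ) ≤ (n : ℝ) * Real.exp (-sParam ℓ k) / (2 * Real.exp 1 * ℓ) := by
      rw [betaFun]
      simp only [if_pos rfl]
      exact Nat.floor_le (by positivity)
    have hβ2 : (betaFun ℓ k n 0 : ℝ) ≤ (n : ℝ) * Real.exp (-sParam ℓ k) := by
      calc (betaFun ℓ k n 0 : ℝ) ≤ (n : ℝ) * Real.exp (-sParam ℓ k) / (2 * Real.exp 1 * ℓ) := hβ
        _ ≤ (n : ℝ) * Real.exp (-sParam ℓ k) := div_le_self (by positivity) hden1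
    rw [Nat.choose_zero_right]
    push_cast
    rw [one_mul, pow_one, div_le_iff₀ hnR]
    linarith [hβ2]
  · have hj1 : 1 ≤ j := Nat.one_le_iff_ne_zero.mpr h0
    have hjR1 : (1 : ℝ) ≤ (j : ℝ) := by exact_mod_cast hj1
    have hjR0 : (0 : ℝ) < (j : ℝ) := by linarith
    set s := sParam ℓ k with hsdef
    set e1 := Real.exp 1 with he1def
    set E2 := Real.exp (-s / j) with hE2
    have hE2pos : (0 : ℝ) < E2 := Real.exp_pos _
    have hβ : (betaFun ℓ k n j : ℝ) ≤ (j : ℝ) * n * E2 / (2 * e1 * ℓ) := by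
      rw [betaFun, if_neg h0, if_pos hj]
      exact Nat.floor_le (by positivity)
    set r := (j : ℝ) / (2 * e1 * ℓ) * E2 with hr
    have hr0 : 0 ≤ r := by positivity
    have hβn : (betaFun ℓ k n j : ℝ) / n ≤ r := by
      rw [div_le_iff₀ hnR, hr]
      calc (betaFun ℓ k n j : ℝ) ≤ (j : ℝ) * n * E2 / (2 * e1 * ℓ) := hβ
        _ = (j : ℝ) / (2 * e1 * ℓ) * E2 * n := by field_simp
    have hpow : ((betaFun ℓ k n j : ℝ) / n) ^ (j + 1) ≤ r ^ (j + 1) :=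
      pow_le_pow_left₀ (by positivity) hβn _
    have hY : E2 ^ (j + 1) ≤ Real.exp (-s) := by
      rw [hE2, ← Real.exp_nat_mul]
      apply Real.exp_le_exp.mpr
      have heq : ((j + 1 : ℕ) : ℝ) * (-s / j) = -s - s / j := by
        push_cast
        field_simp
        ring
      rw [heq]
      have : 0 ≤ s / j := by positivity
      linarith
    have hfj : (0 : ℝ) < (j.factorial : ℝ) := by exact_mod_cast j.factorial_pos
    have hchoose : (c.choose j : ℝ) * (j.factorial : ℝ) ≤ (ℓ : ℝ) ^ j := by
      have hnat : c.choose j * j.factorial ≤ ℓ ^ j := by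
        calc c.choose j * j.factorial = j.factorial * c.choose j := by ring
          _ = c.descFactorial j := (Nat.descFactorial_eq_factorial_mul_choose c j).symm
          _ ≤ c ^ j := Nat.descFactorial_le_pow c j
          _ ≤ ℓ ^ j := Nat.pow_le_pow_left hc j
      exact_mod_cast hnat
    have hjj : (j : ℝ) ^ j ≤ (j.factorial : ℝ) * e1 ^ j := by
      have := pow_le_factorial_mul_exp j (le_of_lt hjR0)
      have hexpj : Real.exp (j : ℝ) = e1 ^ j := by
        rw [he1def, ← Real.exp_nat_mul, mul_one]
      rw [hexpj] at this
      exact this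
    have hj2 : (j : ℝ) ≤ (2 : ℝ) ^ (j + 1) := by
      have h1 : j < 2 ^ j := Nat.lt_two_pow_self
      have h2 : (2 : ℕ) ^ j ≤ 2 ^ (j + 1) := Nat.pow_le_pow_right (by norm_num) (Nat.le_succ j)
      exact_mod_cast le_of_lt (lt_of_lt_of_le h1 h2)
    have hX : (c.choose j : ℝ) * ((j : ℝ) / (2 * e1 * ℓ)) ^ (j + 1) ≤ 1 := by
      rw [div_pow, ← mul_div_assoc, div_le_one (by positivity)]
      have hmain : (c.choose j : ℝ) * (j : ℝ) ^ (j + 1) * (j.factorial : ℝ)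
          ≤ (2 * e1 * ℓ) ^ (j + 1) * (j.factorial : ℝ) := by
        calc (c.choose j : ℝ) * (j : ℝ) ^ (j + 1) * (j.factorial : ℝ)
            = ((c.choose j : ℝ) * (j.factorial : ℝ)) * ((j : ℝ) ^ j) * (j : ℝ) := by
              rw [pow_succ]; ring
          _ ≤ ((ℓ : ℝ) ^ j) * ((j.factorial : ℝ) * e1 ^ j) * ((2 : ℝ) ^ (j + 1)) := by
              apply mul_le_mul _ hj2 (by positivity) (by positivity)
              apply mul_le_mul hchoose hjj (by positivity) (by positivity)
          _ = ((ℓ : ℝ) ^ j * e1 ^ j * (2 : ℝ) ^ (j + 1)) * (j.factorial : ℝ) := by ring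
          _ ≤ ((ℓ : ℝ) ^ (j + 1) * e1 ^ (j + 1) * (2 : ℝ) ^ (j + 1)) * (j.factorial : ℝ) := by
              apply mul_le_mul_of_nonneg_right _ (le_of_lt hfj)
              apply mul_le_mul_of_nonneg_right _ (by positivity)
              apply mul_le_mul (pow_le_pow_right₀ hℓR (Nat.le_succ j))
                (pow_le_pow_right₀ he1 (Nat.le_succ j)) (by positivity) (by positivity)
          _ = (2 * e1 * ℓ) ^ (j + 1) * (j.factorial : ℝ) := by
              rw [mul_pow, mul_pow]; ring
      exact le_of_mul_le_mul_right hmain hfj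
    calc (c.choose j : ℝ) * ((betaFun ℓ k n j : ℝ) / n) ^ (j + 1)
        ≤ (c.choose j : ℝ) * r ^ (j + 1) := by
          apply mul_le_mul_of_nonneg_left hpow (by positivity)
      _ = ((c.choose j : ℝ) * ((j : ℝ) / (2 * e1 * ℓ)) ^ (j + 1)) * E2 ^ (j + 1) := by
          rw [hr, mul_pow]; ring
      _ ≤ 1 * Real.exp (-s) := by
          apply mul_le_mul hX hY (by positivity) (by norm_num)
      _ = Real.exp (-s) := one_mul _

lemma term_bound {ℓ k n : ℕ} (hℓ : 1 ≤ ℓ) (hk : 8 * ℓ ≤ k) (hn : 1 ≤ n)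
    {c : ℕ} (hc : c ≤ ℓ) {j : ℕ} (hj : j < ℓ) :
    ((c.choose j * (betaFun ℓ k n j).descFactorial (j + 1) * (n - (j + 1)).factorial : ℕ) : ℝ)
      ≤ Real.exp (-sParam ℓ k) * (n.factorial : ℝ) := by
  have hβn := betaFun_le_n (n := n) hℓ hk j
  by_cases hcase : n < j + 1
  · have hz : (betaFun ℓ k n j).descFactorial (j + 1) = 0 :=
      Nat.descFactorial_eq_zero_iff_lt.mpr (lt_of_le_of_lt hβn hcase)
    rw [hz]
    simp only [Nat.mul_zero, Nat.zero_mul, Nat.cast_zero]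
    positivity
  · push_neg at hcase
    have key : c.choose j * (betaFun ℓ k n j).descFactorial (j + 1) * (n - (j + 1)).factorial
        * n ^ (j + 1) ≤ c.choose j * (betaFun ℓ k n j) ^ (j + 1) * n.factorial := by
      calc c.choose j * (betaFun ℓ k n j).descFactorial (j + 1) * (n - (j + 1)).factorial
          * n ^ (j + 1)
          = c.choose j * (((betaFun ℓ k n j).descFactorial (j + 1) * n ^ (j + 1))
            * (n - (j + 1)).factorial) := by ring
        _ ≤ c.choose j * (((betaFun ℓ k n j) ^ (j + 1) * n.descFactorial (j + 1))
            * (n - (j + 1)).factorial) := by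
            apply Nat.mul_le_mul_left
            apply Nat.mul_le_mul_right
            exact descFactorial_ratio hβn (j + 1)
        _ = c.choose j * (betaFun ℓ k n j) ^ (j + 1)
            * (n.descFactorial (j + 1) * (n - (j + 1)).factorial) := by ring
        _ = c.choose j * (betaFun ℓ k n j) ^ (j + 1) * n.factorial := by
            rw [dF_mul_fact hcase]
    have hnR : (0 : ℝ) < (n : ℝ) := by exact_mod_cast hn
    have hpownR : (0 : ℝ) < ((n : ℝ)) ^ (j + 1) := by positivity
    have keyR : ((c.choose j * (betaFun ℓ k n j).descFactorial (j + 1)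
        * (n - (j + 1)).factorial : ℕ) : ℝ) * (n : ℝ) ^ (j + 1)
        ≤ (c.choose j : ℝ) * ((betaFun ℓ k n j : ℝ) / n) ^ (j + 1) * (n.factorial : ℝ)
          * (n : ℝ) ^ (j + 1) := by
      have hcast : ((c.choose j * (betaFun ℓ k n j).descFactorial (j + 1)
          * (n - (j + 1)).factorial : ℕ) : ℝ) * (n : ℝ) ^ (j + 1)
          ≤ ((c.choose j * (betaFun ℓ k n j) ^ (j + 1) * n.factorial : ℕ) : ℝ) := by
        exact_mod_cast key
      calc ((c.choose j * (betaFun ℓ k n j).descFactorial (j + 1)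
          * (n - (j + 1)).factorial : ℕ) : ℝ) * (n : ℝ) ^ (j + 1)
          ≤ ((c.choose j * (betaFun ℓ k n j) ^ (j + 1) * n.factorial : ℕ) : ℝ) := hcast
        _ = (c.choose j : ℝ) * ((betaFun ℓ k n j : ℝ) / n) ^ (j + 1) * (n.factorial : ℝ)
            * (n : ℝ) ^ (j + 1) := by
            push_cast
            rw [div_pow]
            field_simp
    have hfinal := mul_le_mul_of_nonneg_right
      (mul_le_mul_of_nonneg_right (choose_beta_bound hℓ hk hn hc hj)
        (by positivity : (0:ℝ) ≤ (n.factorial : ℝ))) (le_of_lt hpownR)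
    have := keyR.trans hfinal
    exact le_of_mul_le_mul_right this hpownR

lemma fail_card_bound {ℓ k n : ℕ} (hℓ : 1 ≤ ℓ) (hk : 8 * ℓ ≤ k) (hn : 1 ≤ n)
    (v : Fin n → ℝ) (hv : Function.Injective v) (e : Fin n)
    (hL : ((univ : Finset (Fin n)).filter fun x => v e < v x).card < ℓ) :
    ((((univ : Finset (Perm (Fin n))).filter
        fun σ => σ⁻¹ e ∉ candSet ℓ k (fun i => v (σ i))).card : ℕ) : ℝ)
      ≤ (ℓ : ℝ) * Real.exp (-sParam ℓ k) * (n.factorial : ℝ) := by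
  classical
  set L := (univ : Finset (Fin n)).filter fun x => v e < v x with hLdef
  have heL : e ∉ L := by simp [hLdef]
  have hnat : (((univ : Finset (Perm (Fin n))).filter
      fun σ => σ⁻¹ e ∉ candSet ℓ k (fun i => v (σ i))).card : ℕ)
      ≤ ∑ j ∈ Finset.range ℓ, L.card.choose j
          * ((betaFun ℓ k n j).descFactorial (j + 1) * (n - (j + 1)).factorial) := by
    calc (((univ : Finset (Perm (Fin n))).filter
        fun σ => σ⁻¹ e ∉ candSet ℓ k (fun i => v (σ i))).card : ℕ)
        ≤ ((Finset.range ℓ).biUnion fun j =>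
            (L.powersetCard j).biUnion fun S =>
              (univ : Finset (Perm (Fin n))).filter fun σ =>
                ∀ x ∈ insert e S, ((σ⁻¹ x : Fin n) : ℕ) < betaFun ℓ k n j).card :=
          card_le_card (fail_subset hℓ v hv e hL)
      _ ≤ ∑ j ∈ Finset.range ℓ, ((L.powersetCard j).biUnion fun S =>
              (univ : Finset (Perm (Fin n))).filter fun σ =>
                ∀ x ∈ insert e S, ((σ⁻¹ x : Fin n) : ℕ) < betaFun ℓ k n j).card :=
          card_biUnion_le
      _ ≤ ∑ j ∈ Finset.range ℓ, ∑ S ∈ L.powersetCard j,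
            ((univ : Finset (Perm (Fin n))).filter fun σ =>
                ∀ x ∈ insert e S, ((σ⁻¹ x : Fin n) : ℕ) < betaFun ℓ k n j).card :=
          Finset.sum_le_sum fun j _ => card_biUnion_le
      _ ≤ ∑ j ∈ Finset.range ℓ, ∑ S ∈ L.powersetCard j,
            ((betaFun ℓ k n j).descFactorial (j + 1) * (n - (j + 1)).factorial) := by
          apply Finset.sum_le_sum
          intro j _
          apply Finset.sum_le_sum
          intro S hS
          rw [mem_powersetCard] at hS
          obtain ⟨hSL, hScard⟩ := hS
          have heS : e ∉ S := fun h => heL (hSL h)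
          have hTcard : (insert e S).card = j + 1 := by
            rw [card_insert_of_notMem heS, hScard]
          have := count_early (insert e S) (betaFun ℓ k n j)
          rw [hTcard] at this
          exact this
      _ = ∑ j ∈ Finset.range ℓ, L.card.choose j
            * ((betaFun ℓ k n j).descFactorial (j + 1) * (n - (j + 1)).factorial) := by
          apply Finset.sum_congr rfl
          intro j _
          rw [Finset.sum_const, card_powersetCard, smul_eq_mul]
  calc ((((univ : Finset (Perm (Fin n))).filter
      fun σ => σ⁻¹ e ∉ candSet ℓ k (fun i => v (σ i))).card : ℕ) : ℝ)
      ≤ ((∑ j ∈ Finset.range ℓ, L.card.choose j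
          * ((betaFun ℓ k n j).descFactorial (j + 1) * (n - (j + 1)).factorial) : ℕ) : ℝ) := by
        exact_mod_cast hnat
    _ = ∑ j ∈ Finset.range ℓ, ((L.card.choose j
          * (betaFun ℓ k n j).descFactorial (j + 1) * (n - (j + 1)).factorial : ℕ) : ℝ) := by
        push_cast; apply Finset.sum_congr rfl; intro j _; ring
    _ ≤ ∑ j ∈ Finset.range ℓ, Real.exp (-sParam ℓ k) * (n.factorial : ℝ) := by
        apply Finset.sum_le_sum
        intro j hj
        exact term_bound hℓ hk hn (le_of_lt hL) (mem_range.mp hj)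
    _ = (ℓ : ℝ) * Real.exp (-sParam ℓ k) * (n.factorial : ℝ) := by
        rw [Finset.sum_const, card_range, nsmul_eq_mul]; ring

/-- **Performance of the capacity-unconstrained secretary algorithm `ALG'^β`
(Lemma 3.3 of Ezra–Feldman–Nehama).**  Fix `ℓ ≥ 1`, `k ≥ 8ℓ`, `s = (k−8ℓ)/(2+2 ln ℓ)`.
For all large enough `n` and every injective vector of nonnegative values `v`, if the
arrival order is a uniformly random permutation then the candidate set `S'` of `ALG'^β`
satisfies `E_σ[TOP_ℓ(S'; w)] ≥ (1 − ℓ·e^{−s}) · TOP_ℓ(v)`. -/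
theorem secretary_alg_beta_unconstrained (ℓ k : ℕ) (hℓ : 1 ≤ ℓ) (hk : 8 * ℓ ≤ k) :
    ∃ N : ℕ, ∀ n : ℕ, N ≤ n → ∀ v : Fin n → ℝ, Function.Injective v → (∀ i, 0 ≤ v i) →
      (1 - ℓ * Real.exp (-sParam ℓ k)) * TOPval ℓ Finset.univ v ≤
        ((n.factorial : ℝ))⁻¹ * ∑ σ : Equiv.Perm (Fin n),
          TOPval ℓ (candSet ℓ k (fun i => v (σ i))) (fun i => v (σ i)) := by
  classical
  refine ⟨1, fun n hn v hv hv0 => ?_⟩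
  obtain ⟨B, hBsub, hBcard, hBsum⟩ := TOPval_exists (ℓ := ℓ) (univ : Finset (Fin n)) v
  rw [hBsum]
  have hnf : (0 : ℝ) < (n.factorial : ℝ) := by exact_mod_cast n.factorial_pos
  set E := Real.exp (-sParam ℓ k) with hE
  -- Step A: pointwise lower bound for each permutation
  have stepA : ∀ σ : Perm (Fin n),
      ∑ e ∈ B.filter (fun e => σ⁻¹ e ∈ candSet ℓ k (fun i => v (σ i))), v e
        ≤ TOPval ℓ (candSet ℓ k (fun i => v (σ i))) (fun i => v (σ i)) := by
    intro σ
    set P := fun e => σ⁻¹ e ∈ candSet ℓ k (fun i => v (σ i)) with hP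
    set C := (B.filter P).image (fun e => σ⁻¹ e) with hC
    have hCsub : C ⊆ candSet ℓ k (fun i => v (σ i)) := by
      intro i hi
      rw [hC, mem_image] at hi
      obtain ⟨e, he, rfl⟩ := hi
      exact (mem_filter.mp he).2
    have hCcard : C.card ≤ ℓ := by
      calc C.card ≤ (B.filter P).card := card_image_le
        _ ≤ B.card := card_filter_le _ _
        _ ≤ ℓ := hBcard
    have hsum : ∑ i ∈ C, v (σ i) = ∑ e ∈ B.filter P, v e := by
      rw [hC, Finset.sum_image (fun a _ b _ h => (Equiv.injective σ⁻¹) h)]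
      apply Finset.sum_congr rfl
      intro e _
      congr 1
      simp
    rw [← hsum]
    exact le_TOPval (fun i => v (σ i)) hCsub hCcard
  -- Step B: sum over permutations, swap order
  have stepB : ∑ e ∈ B, v e * (((univ : Finset (Perm (Fin n))).filter
        fun σ => σ⁻¹ e ∈ candSet ℓ k (fun i => v (σ i))).card : ℝ)
      ≤ ∑ σ : Perm (Fin n), TOPval ℓ (candSet ℓ k (fun i => v (σ i))) (fun i => v (σ i)) := by
    have : ∑ σ : Perm (Fin n),
        ∑ e ∈ B.filter (fun e => σ⁻¹ e ∈ candSet ℓ k (fun i => v (σ i))), v e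
        = ∑ e ∈ B, v e * (((univ : Finset (Perm (Fin n))).filter
            fun σ => σ⁻¹ e ∈ candSet ℓ k (fun i => v (σ i))).card : ℝ) := by
      have h1 : ∑ σ : Perm (Fin n),
          ∑ e ∈ B.filter (fun e => σ⁻¹ e ∈ candSet ℓ k (fun i => v (σ i))), v e
          = ∑ σ : Perm (Fin n), ∑ e ∈ B,
              if σ⁻¹ e ∈ candSet ℓ k (fun i => v (σ i)) then v e else 0 := by
        apply Finset.sum_congr rfl
        intro σ _
        rw [Finset.sum_filter]
      rw [h1, Finset.sum_comm]
      apply Finset.sum_congr rfl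
      intro e _
      rw [← Finset.sum_filter, Finset.sum_const, nsmul_eq_mul]
      ring
    rw [← this]
    exact Finset.sum_le_sum fun σ _ => stepA σ
  -- Step C: count of good permutations for each element of B
  have stepC : ∀ e ∈ B, (1 - (ℓ : ℝ) * E) * (n.factorial : ℝ)
      ≤ (((univ : Finset (Perm (Fin n))).filter
          fun σ => σ⁻¹ e ∈ candSet ℓ k (fun i => v (σ i))).card : ℝ) := by
    intro e he
    have hL := opt_larger_lt hℓ v hBcard hBsum he
    have hfail := fail_card_bound hℓ hk hn v hv e hL
    have hsplit : ((univ : Finset (Perm (Fin n))).filter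
          fun σ => σ⁻¹ e ∈ candSet ℓ k (fun i => v (σ i))).card
        + ((univ : Finset (Perm (Fin n))).filter
          fun σ => σ⁻¹ e ∉ candSet ℓ k (fun i => v (σ i))).card
        = n.factorial := by
      rw [Finset.card_filter_add_card_filter_not, card_univ, Fintype.card_perm,
        Fintype.card_fin]
    have : (((univ : Finset (Perm (Fin n))).filter
        fun σ => σ⁻¹ e ∈ candSet ℓ k (fun i => v (σ i))).card : ℝ)
        = (n.factorial : ℝ) - (((univ : Finset (Perm (Fin n))).filter
          fun σ => σ⁻¹ e ∉ candSet ℓ k (fun i => v (σ i))).card : ℝ) := by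
      have := congrArg (fun m : ℕ => (m : ℝ)) hsplit
      push_cast at this
      linarith
    rw [this]
    rw [hE] at *
    nlinarith [hfail]
  -- Combine
  have main : ∑ e ∈ B, v e * ((1 - (ℓ : ℝ) * E) * (n.factorial : ℝ))
      ≤ ∑ σ : Perm (Fin n), TOPval ℓ (candSet ℓ k (fun i => v (σ i))) (fun i => v (σ i)) := by
    refine le_trans (Finset.sum_le_sum fun e he => ?_) stepB
    exact mul_le_mul_of_nonneg_left (stepC e he) (hv0 e)
  have hrw : (1 - (ℓ : ℝ) * E) * ∑ e ∈ B, v e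
      = (n.factorial : ℝ)⁻¹ * ∑ e ∈ B, v e * ((1 - (ℓ : ℝ) * E) * (n.factorial : ℝ)) := by
    rw [← Finset.sum_mul]
    field_simp
  rw [hrw]
  apply mul_le_mul_of_nonneg_left main (by positivity)
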